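/- Let b > 0 and S = [0, b]. Let g : ℝ → ℝ and suppose e* ∈ (0, b) satisfies g(e*) > g(e) for every e ∈ S with e ≠ e*, and g is differentiable at e*. Let φ : ℝ → ℝ be nondecreasing on S, differentiable at e* with φ'(e*) > 0, and let Δ > 0. Then every maximizer ê ∈ S of e ↦ g(e) + Δ·φ(e) on S satisfies ê > e* (strict inequality). -/

import Mathlib

/-- Lemma 2, strict inequality: if `e* ∈ (0, b)` is the unique maximizer of `g`
on `S = [0, b]`, `g` is differentiable at `e*`, `φ` is nondecreasing on `S` and differentiable
at `e*` with `φ'(e*) > 0`, and `Δ > 0`, then every maximizer `ê ∈ S` of `g + Δ·φ` on `S`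
satisfies `ê > e*`. -/
theorem maximizer_gt_of_strictly_increasing_persuasion
    (b : ℝ) (hb : 0 < b) (g φ : ℝ → ℝ)
    (estar : ℝ) (hstar : estar ∈ Set.Ioo 0 b)
    (hmax : ∀ e ∈ Set.Icc 0 b, e ≠ estar → g e < g estar)
    (hg : DifferentiableAt ℝ g estar)
    (hφmono : MonotoneOn φ (Set.Icc 0 b))
    (hφdiff : DifferentiableAt ℝ φ estar) (hφ' : 0 < deriv φ estar)
    (Δ : ℝ) (hΔ : 0 < Δ)
    (ehat : ℝ) (hehat : ehat ∈ Set.Icc 0 b)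
    (hopt : ∀ e ∈ Set.Icc 0 b, g e + Δ * φ e ≤ g ehat + Δ * φ ehat) :
    estar < ehat := by
  have hstarIcc : estar ∈ Set.Icc 0 b := Set.mem_Icc_of_Ioo hstar
  by_contra hle
  push_neg at hle
  rcases lt_or_eq_of_le hle with hlt | heq
  · -- ehat < estar: contradiction with optimality at estar
    have h1 : g ehat < g estar := hmax ehat hehat (ne_of_lt hlt)
    have h2 : φ ehat ≤ φ estar := hφmono hehat hstarIcc hle
    have := hopt estar hstarIcc
    nlinarith
  · -- ehat = estar: then estar is an interior local max of g + Δφ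
    subst heq
    have hnhds : Set.Ioo (0:ℝ) b ∈ nhds ehat := (isOpen_Ioo).mem_nhds hstar
    have hlocF : IsLocalMax (fun e => g e + Δ * φ e) ehat := by
      filter_upwards [hnhds] with x hx using hopt x (Set.mem_Icc_of_Ioo hx)
    have hlocg : IsLocalMax g ehat := by
      filter_upwards [hnhds] with x hx
      rcases eq_or_ne x ehat with rfl | hne
      · exact le_refl _
      · exact le_of_lt (hmax x (Set.mem_Icc_of_Ioo hx) hne)
    have hdg : deriv g ehat = 0 := hlocg.deriv_eq_zero
    have hdF : deriv (fun e => g e + Δ * φ e) ehat = 0 := hlocF.deriv_eq_zero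
    have : deriv (fun e => g e + Δ * φ e) ehat = deriv g ehat + Δ * deriv φ ehat := by
      rw [deriv_fun_add hg (hφdiff.const_mul Δ), deriv_const_mul Δ hφdiff]
    rw [this, hdg, zero_add] at hdF
    nlinarith
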